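/- Let X be a complex Banach space, let (T(t))_{t≥0} be a strongly continuous semigroup on X that is bounded by a constant M ≥ 1, let Q be a bounded linear operator on X satisfying T(t)Q = QT(t) for all t ≥ 0, and let 1 ≤ p < ∞. Suppose that for every x ∈ X the function t ↦ ‖T(t)Qx‖^p is integrable on (0,∞). Then there exists a constant C > 0 such that ‖T(t)Qx‖ ≤ C t^{−1/p} ‖x‖ for all t > 0 and all x ∈ X; in particular the operator norm of T(t)Q is O(t^{−1/p}) as t → ∞. -/

import Mathlib

open MeasureTheory Filter Topology
open scoped ENNReal NNReal

/-- `‖T(t)Q‖ = O(t^{-1/p})` from `p`-integrability of orbits through `Q`. -/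
theorem stmt2 {X : Type*} [NormedAddCommGroup X] [NormedSpace ℂ X] [CompleteSpace X]
    (T : ℝ → X →L[ℂ] X) (M : ℝ) (hM : 1 ≤ M)
    (hT0 : T 0 = 1)
    (hTadd : ∀ s t : ℝ, 0 ≤ s → 0 ≤ t → T (s + t) = (T s) ∘L (T t))
    (hTcont : ∀ x : X, ContinuousOn (fun t : ℝ => T t x) (Set.Ici (0 : ℝ)))
    (hTbdd : ∀ t : ℝ, 0 ≤ t → ‖T t‖ ≤ M)
    (Q : X →L[ℂ] X)
    (hQ : ∀ t : ℝ, 0 ≤ t → (T t) ∘L Q = Q ∘L (T t))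
    (p : ℝ) (hp : 1 ≤ p)
    (hint : ∀ x : X, IntegrableOn (fun t : ℝ => ‖T t (Q x)‖ ^ p) (Set.Ioi (0 : ℝ))) :
    ∃ C : ℝ, 0 < C ∧ ∀ t : ℝ, 0 < t → ∀ x : X,
      ‖T t (Q x)‖ ≤ C * t ^ (-(1 / p)) * ‖x‖ := by
  classical
  borelize X
  have hp0 : (0:ℝ) < p := lt_of_lt_of_le one_pos hp
  have hM0 : (0:ℝ) < M := lt_of_lt_of_le one_pos hM
  set G : X → ℝ≥0∞ := fun x => ∫⁻ s in Set.Ioi (0:ℝ), ENNReal.ofReal (‖T s (Q x)‖ ^ p)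
    with hGdef
  -- measurability of the integrand
  have hmeas : ∀ x : X, AEMeasurable (fun s : ℝ => ENNReal.ofReal (‖T s (Q x)‖ ^ p))
      (volume.restrict (Set.Ioi (0:ℝ))) := by
    intro x
    have h1 : AEMeasurable (fun s : ℝ => T s (Q x)) (volume.restrict (Set.Ioi (0:ℝ))) :=
      ((hTcont (Q x)).mono Set.Ioi_subset_Ici_self).aemeasurable measurableSet_Ioi
    have h2 : Continuous (fun v : X => ENNReal.ofReal (‖v‖ ^ p)) :=
      ENNReal.continuous_ofReal.comp ((Real.continuous_rpow_const hp0.le).comp continuous_norm)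
    exact h2.measurable.comp_aemeasurable h1
  have hGfin : ∀ x : X, G x ≠ ⊤ := fun x => ((hint x).setLIntegral_lt_top).ne
  -- the sets E n
  set E : ℕ → Set X := fun n => {x | G x ≤ n} with hEdef
  have hEclosed : ∀ n, IsClosed (E n) := by
    intro n
    apply IsSeqClosed.isClosed
    intro u x hu hux
    have hpt : ∀ s : ℝ, Tendsto (fun k => ENNReal.ofReal (‖T s (Q (u k))‖ ^ p)) atTop
        (𝓝 (ENNReal.ofReal (‖T s (Q x)‖ ^ p))) := by
      intro s
      have h1 : Tendsto (fun k => T s (Q (u k))) atTop (𝓝 (T s (Q x))) :=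
        (((T s).continuous.comp Q.continuous).tendsto x).comp hux
      have h2 : Continuous (fun v : X => ENNReal.ofReal (‖v‖ ^ p)) :=
        ENNReal.continuous_ofReal.comp ((Real.continuous_rpow_const hp0.le).comp continuous_norm)
      exact (h2.tendsto _).comp h1
    have key : G x ≤ liminf (fun k => G (u k)) atTop := by
      have hF := lintegral_liminf_le' (μ := volume.restrict (Set.Ioi (0:ℝ))) (u := atTop)
        (fun k => hmeas (u k))
      refine le_trans (le_of_eq ?_) hF
      exact lintegral_congr fun s => ((hpt s).liminf_eq).symm
    refine le_trans key ?_
    have : liminf (fun k => G (u k)) atTop ≤ liminf (fun _ : ℕ => (n : ℝ≥0∞)) atTop :=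
      liminf_le_liminf (Filter.Eventually.of_forall fun k => hu k)
    simpa using this
  have : Nonempty X := ⟨0⟩
  have hcover : (⋃ n, E n) = Set.univ := by
    ext x
    simp only [Set.mem_iUnion, Set.mem_univ, iff_true]
    obtain ⟨n, hn⟩ := ENNReal.exists_nat_gt (hGfin x)
    exact ⟨n, hn.le⟩
  obtain ⟨n, hn⟩ := nonempty_interior_of_iUnion_of_closed hEclosed hcover
  obtain ⟨x₀, hx₀⟩ := hn
  obtain ⟨ε, hε, hball⟩ := Metric.mem_nhds_iff.mp (mem_interior_iff_mem_nhds.mp hx₀)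
  -- small vectors
  have hsmall : ∀ y : X, ‖y‖ ≤ ε/2 →
      G y ≤ ENNReal.ofReal (2 ^ p) * ((n : ℝ≥0∞) + (n : ℝ≥0∞)) := by
    intro y hy
    have h1 : G (x₀ + y) ≤ n := by
      have : x₀ + y ∈ Metric.ball x₀ ε := by
        simp only [Metric.mem_ball, dist_eq_norm, add_sub_cancel_left]
        linarith
      exact hball this
    have h2 : G x₀ ≤ n := hball (Metric.mem_ball_self hε)
    have hpt : ∀ s : ℝ, ENNReal.ofReal (‖T s (Q y)‖ ^ p) ≤
        ENNReal.ofReal (2 ^ p) * (ENNReal.ofReal (‖T s (Q (x₀ + y))‖ ^ p)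
          + ENNReal.ofReal (‖T s (Q x₀)‖ ^ p)) := by
      intro s
      set a := ‖T s (Q y)‖
      set b := ‖T s (Q (x₀ + y))‖
      set c := ‖T s (Q x₀)‖
      have hab : a ≤ b + c := by
        have : T s (Q y) = T s (Q (x₀ + y)) - T s (Q x₀) := by
          rw [← map_sub, ← map_sub, add_sub_cancel_left]
        rw [show a = ‖T s (Q (x₀ + y)) - T s (Q x₀)‖ from by rw [← this]]
        exact norm_sub_le _ _
      have h0b : (0:ℝ) ≤ b := norm_nonneg _
      have h0c : (0:ℝ) ≤ c := norm_nonneg _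
      have key : a ^ p ≤ 2 ^ p * (b ^ p + c ^ p) := by
        have h1' : a ^ p ≤ (b + c) ^ p :=
          Real.rpow_le_rpow (norm_nonneg _) hab hp0.le
        have h2' : (b + c) ^ p ≤ (2 * max b c) ^ p := by
          apply Real.rpow_le_rpow (by linarith) _ hp0.le
          rcases le_total b c with h | h
          · simp [max_eq_right h]; linarith
          · simp [max_eq_left h]; linarith
        have h3' : (2 * max b c) ^ p = 2 ^ p * max b c ^ p :=
          Real.mul_rpow (by norm_num) (le_max_of_le_left h0b)
        have h4' : max b c ^ p ≤ b ^ p + c ^ p := by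
          rcases max_cases b c with ⟨hm, _⟩ | ⟨hm, _⟩
          · rw [hm]; exact le_add_of_nonneg_right (Real.rpow_nonneg h0c p)
          · rw [hm]; exact le_add_of_nonneg_left (Real.rpow_nonneg h0b p)
        calc a ^ p ≤ (2 * max b c) ^ p := h1'.trans h2'
          _ = 2 ^ p * max b c ^ p := h3'
          _ ≤ 2 ^ p * (b ^ p + c ^ p) := by
              exact mul_le_mul_of_nonneg_left h4' (Real.rpow_nonneg (by norm_num) p)
      calc ENNReal.ofReal (a ^ p) ≤ ENNReal.ofReal (2 ^ p * (b ^ p + c ^ p)) :=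
            ENNReal.ofReal_le_ofReal key
        _ = ENNReal.ofReal (2 ^ p) * (ENNReal.ofReal (b ^ p) + ENNReal.ofReal (c ^ p)) := by
            rw [ENNReal.ofReal_mul (Real.rpow_nonneg (by norm_num) p),
              ENNReal.ofReal_add (Real.rpow_nonneg h0b p) (Real.rpow_nonneg h0c p)]
    calc G y ≤ ∫⁻ s in Set.Ioi (0:ℝ), ENNReal.ofReal (2 ^ p) *
          (ENNReal.ofReal (‖T s (Q (x₀ + y))‖ ^ p) + ENNReal.ofReal (‖T s (Q x₀)‖ ^ p)) :=
        lintegral_mono fun s => hpt s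
      _ = ENNReal.ofReal (2 ^ p) * ∫⁻ s in Set.Ioi (0:ℝ),
          (ENNReal.ofReal (‖T s (Q (x₀ + y))‖ ^ p) + ENNReal.ofReal (‖T s (Q x₀)‖ ^ p)) :=
        lintegral_const_mul' _ _ ENNReal.ofReal_ne_top
      _ = ENNReal.ofReal (2 ^ p) * (G (x₀ + y) + G x₀) := by
        rw [lintegral_add_left' (hmeas (x₀ + y)) _]
      _ ≤ ENNReal.ofReal (2 ^ p) * ((n : ℝ≥0∞) + (n : ℝ≥0∞)) := by
        exact mul_le_mul_right (add_le_add h1 h2) _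
  -- scaling
  have hscale : ∀ (c : ℝ), 0 ≤ c → ∀ x : X, G ((c : ℂ) • x) = ENNReal.ofReal (c ^ p) * G x := by
    intro c hc x
    have hpt : ∀ s : ℝ, ENNReal.ofReal (‖T s (Q ((c : ℂ) • x))‖ ^ p)
        = ENNReal.ofReal (c ^ p) * ENNReal.ofReal (‖T s (Q x)‖ ^ p) := by
      intro s
      have : ‖T s (Q ((c : ℂ) • x))‖ = c * ‖T s (Q x)‖ := by
        rw [_root_.map_smul, _root_.map_smul, norm_smul, Complex.norm_real, Real.norm_of_nonneg hc]
      rw [this, Real.mul_rpow hc (norm_nonneg _),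
        ENNReal.ofReal_mul (Real.rpow_nonneg hc p)]
    calc G ((c : ℂ) • x) = ∫⁻ s in Set.Ioi (0:ℝ),
          ENNReal.ofReal (c ^ p) * ENNReal.ofReal (‖T s (Q x)‖ ^ p) :=
        lintegral_congr fun s => hpt s
      _ = ENNReal.ofReal (c ^ p) * G x := lintegral_const_mul' _ _ ENNReal.ofReal_ne_top
  -- global bound : G x ≤ ofReal (K * ‖x‖^p)
  set K : ℝ := (2/ε) ^ p * (2 ^ p * (2 * n)) with hKdef
  have hK0 : 0 ≤ K := by
    apply mul_nonneg (Real.rpow_nonneg (by positivity) p)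
    apply mul_nonneg (Real.rpow_nonneg (by norm_num) p)
    positivity
  have hGbound : ∀ x : X, G x ≤ ENNReal.ofReal (K * ‖x‖ ^ p) := by
    intro x
    rcases eq_or_ne x 0 with rfl | hx
    · have : G (0 : X) = 0 := by
        rw [hGdef]
        simp [Real.zero_rpow hp0.ne']
      rw [this]
      exact zero_le
    · have hxn : (0:ℝ) < ‖x‖ := norm_pos_iff.mpr hx
      set c : ℝ := ε / (2 * ‖x‖) with hcdef
      have hc0 : 0 < c := by positivity
      have hcy : ‖(c : ℂ) • x‖ = ε / 2 := by
        rw [norm_smul, Complex.norm_real, Real.norm_of_nonneg hc0.le, hcdef]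
        field_simp
      have hsm := hsmall ((c : ℂ) • x) (le_of_eq hcy)
      rw [hscale c hc0.le x] at hsm
      -- multiply both sides by ofReal (c⁻¹ ^ p)
      have hinv : ENNReal.ofReal (c⁻¹ ^ p) * ENNReal.ofReal (c ^ p) = 1 := by
        rw [← ENNReal.ofReal_mul (Real.rpow_nonneg (by positivity) p),
          ← Real.mul_rpow (by positivity) hc0.le]
        simp [inv_mul_cancel₀ hc0.ne']
      have := mul_le_mul_right hsm (ENNReal.ofReal (c⁻¹ ^ p))
      rw [← mul_assoc, hinv, one_mul] at this
      refine this.trans (le_of_eq ?_)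
      have hn2 : ((n : ℝ≥0∞) + (n : ℝ≥0∞)) = ENNReal.ofReal (2 * n) := by
        rw [ENNReal.ofReal_mul (by norm_num)]
        simp [ENNReal.ofReal_natCast, two_mul]
      rw [hn2, ← ENNReal.ofReal_mul (Real.rpow_nonneg (by positivity) p),
        ← ENNReal.ofReal_mul (by positivity)]
      congr 1
      have hci : c⁻¹ = 2 * ‖x‖ / ε := by rw [hcdef]; field_simp
      rw [hci]
      have : (2 * ‖x‖ / ε) ^ p = (2 / ε) ^ p * ‖x‖ ^ p := by
        rw [show 2 * ‖x‖ / ε = (2 / ε) * ‖x‖ by ring,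
          Real.mul_rpow (by positivity) hxn.le]
      rw [this, hKdef]
      ring
  -- pointwise estimate
  set K' : ℝ := max K 1 with hK'def
  have hK'1 : (1:ℝ) ≤ K' := le_max_right _ _
  have hK'0 : (0:ℝ) < K' := lt_of_lt_of_le one_pos hK'1
  refine ⟨M * K' ^ (1/p), by positivity, ?_⟩
  intro t ht x
  set a : ℝ := ‖T t (Q x)‖ with hadef
  have ha0 : 0 ≤ a := norm_nonneg _
  -- a/M ≤ ‖T s (Q x)‖ for 0 < s < t
  have hlow : ∀ s ∈ Set.Ioo (0:ℝ) t, ENNReal.ofReal ((a / M) ^ p)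
      ≤ ENNReal.ofReal (‖T s (Q x)‖ ^ p) := by
    intro s hs
    apply ENNReal.ofReal_le_ofReal
    apply Real.rpow_le_rpow (by positivity) _ hp0.le
    rw [div_le_iff₀ hM0]
    have hts : T t (Q x) = T (t - s) (T s (Q x)) := by
      have := hTadd (t - s) s (by linarith [hs.2]) hs.1.le
      rw [sub_add_cancel] at this
      rw [this]
      rfl
    calc a = ‖T (t - s) (T s (Q x))‖ := by rw [hadef, hts]
      _ ≤ ‖T (t - s)‖ * ‖T s (Q x)‖ := (T (t - s)).le_opNorm _
      _ ≤ M * ‖T s (Q x)‖ :=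
        mul_le_mul_of_nonneg_right (hTbdd _ (by linarith [hs.2])) (norm_nonneg _)
      _ = ‖T s (Q x)‖ * M := by ring
  have hmain : ENNReal.ofReal ((a / M) ^ p * t) ≤ ENNReal.ofReal (K * ‖x‖ ^ p) := by
    calc ENNReal.ofReal ((a / M) ^ p * t)
        = ENNReal.ofReal ((a / M) ^ p) * volume (Set.Ioo (0:ℝ) t) := by
          rw [Real.volume_Ioo, sub_zero,
            ENNReal.ofReal_mul (Real.rpow_nonneg (by positivity) p)]
      _ = ∫⁻ _ in Set.Ioo (0:ℝ) t, ENNReal.ofReal ((a / M) ^ p) := by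
          rw [setLIntegral_const]
      _ ≤ ∫⁻ s in Set.Ioo (0:ℝ) t, ENNReal.ofReal (‖T s (Q x)‖ ^ p) := by
          refine lintegral_mono_ae ?_
          exact (ae_restrict_iff' measurableSet_Ioo).mpr (Filter.Eventually.of_forall hlow)
      _ ≤ G x := lintegral_mono_set (Set.Ioo_subset_Ioi_self)
      _ ≤ ENNReal.ofReal (K * ‖x‖ ^ p) := hGbound x
  have hreal : (a / M) ^ p * t ≤ K' * ‖x‖ ^ p := by
    have h1 : (a / M) ^ p * t ≤ K * ‖x‖ ^ p :=
      (ENNReal.ofReal_le_ofReal_iff (by positivity)).mp hmain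
    have h2 : K * ‖x‖ ^ p ≤ K' * ‖x‖ ^ p :=
      mul_le_mul_of_nonneg_right (le_max_left _ _) (Real.rpow_nonneg (norm_nonneg _) p)
    linarith
  -- extract the p-th root
  have hfin : a / M ≤ K' ^ (1/p) * ‖x‖ * t ^ (-(1/p)) := by
    have h1 : (a / M) ^ p ≤ K' * ‖x‖ ^ p * t ^ (-(1:ℝ)) := by
      rw [Real.rpow_neg_one]
      rw [← le_div_iff₀ ht] at hreal
      calc (a / M) ^ p ≤ K' * ‖x‖ ^ p / t := hreal
        _ = K' * ‖x‖ ^ p * t⁻¹ := by ring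
    have h2 := Real.rpow_le_rpow (Real.rpow_nonneg (by positivity) p) h1
      (le_of_lt (by positivity : (0:ℝ) < 1/p))
    have hppinv : p * (1/p) = 1 := by field_simp
    have hL : ((a / M) ^ p) ^ (1/p) = a / M := by
      rw [← Real.rpow_mul (by positivity), hppinv, Real.rpow_one]
    have hR : (K' * ‖x‖ ^ p * t ^ (-(1:ℝ))) ^ (1/p)
        = K' ^ (1/p) * ‖x‖ * t ^ (-(1/p)) := by
      rw [Real.mul_rpow (by positivity) (Real.rpow_nonneg ht.le _),
        Real.mul_rpow hK'0.le (Real.rpow_nonneg (norm_nonneg _) p),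
        ← Real.rpow_mul (norm_nonneg x), hppinv, Real.rpow_one,
        ← Real.rpow_mul ht.le]
      norm_num
    rw [hL, hR] at h2
    exact h2
  rw [div_le_iff₀ hM0] at hfin
  calc a ≤ K' ^ (1/p) * ‖x‖ * t ^ (-(1/p)) * M := hfin
    _ = M * K' ^ (1/p) * t ^ (-(1/p)) * ‖x‖ := by ring
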